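/- Let d ≥ 1 and let ℓ_0, …, ℓ_{d-1} be a d-symmetric family of linear functionals on ℂ[x]. For 1 ≤ j ≤ d let v^j = Σ_{k=0}^{j-1} g_{j,k} ℓ_k with complex coefficients g_{j,k} and g_{j,j-1} ≠ 0. Then for every n ≥ 0 and every μ with 0 ≤ μ ≤ j-2, if v^{μ+1}(x^μ) ≠ 0 one has v^j(x^{(d+1)n+μ}) = (v^j(x^μ) / v^{μ+1}(x^μ)) · v^{μ+1}(x^{(d+1)n+μ}). -/

import Mathlib

open Polynomial

lemma aux_key (d : ℕ)
    (ℓ : ℕ → (Polynomial ℂ →ₗ[ℂ] ℂ))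
    (hsym : ∀ (n ν μ : ℕ), ν < d → μ ≤ d → ν ≠ μ →
      ℓ ν (X ^ ((d + 1) * n + μ)) = 0)
    (g : ℕ → ℕ → ℂ) (v : ℕ → (Polynomial ℂ →ₗ[ℂ] ℂ))
    (hv : ∀ j, 1 ≤ j → j ≤ d → v j = ∑ k ∈ Finset.range j, g j k • ℓ k)
    (j n μ : ℕ) (hμj : μ < j) (hjd : j ≤ d) :
    v j (X ^ ((d + 1) * n + μ)) = g j μ * ℓ μ (X ^ ((d + 1) * n + μ)) := by
  rw [hv j (by omega) hjd]
  simp only [LinearMap.sum_apply, Finset.sum_apply, LinearMap.smul_apply, smul_eq_mul]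
  rw [Finset.sum_eq_single μ]
  · intro k hk hkμ
    rw [hsym n k μ (by simp at hk; omega) (by omega) hkμ, mul_zero]
  · intro h
    exact absurd (Finset.mem_range.mpr hμj) h

/-- Lemma 2.1(i) of the paper: for a `d`-symmetric family of linear
functionals `ℓ 0, …, ℓ (d-1)` on `ℂ[x]` and combinations `v j = ∑_{k<j} g j k • ℓ k`
with `g j (j-1) ≠ 0`, for all `n ≥ 0` and `0 ≤ μ ≤ j - 2`, if `v (μ+1) (x^μ) ≠ 0` then
`v j (x^{(d+1)n+μ}) = (v j (x^μ) / v (μ+1) (x^μ)) · v (μ+1) (x^{(d+1)n+μ})`. -/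
theorem stmt_0 (d : ℕ) (hd : 1 ≤ d)
    (ℓ : ℕ → (Polynomial ℂ →ₗ[ℂ] ℂ))
    (hsym : ∀ (n ν μ : ℕ), ν < d → μ ≤ d → ν ≠ μ →
      ℓ ν (X ^ ((d + 1) * n + μ)) = 0)
    (g : ℕ → ℕ → ℂ) (v : ℕ → (Polynomial ℂ →ₗ[ℂ] ℂ))
    (hv : ∀ j, 1 ≤ j → j ≤ d → v j = ∑ k ∈ Finset.range j, g j k • ℓ k)
    (hg : ∀ j, 1 ≤ j → j ≤ d → g j (j - 1) ≠ 0) :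
    ∀ (j n μ : ℕ), 1 ≤ j → j ≤ d → μ + 2 ≤ j →
      v (μ + 1) (X ^ μ) ≠ 0 →
      v j (X ^ ((d + 1) * n + μ)) =
        v j (X ^ μ) / v (μ + 1) (X ^ μ) * v (μ + 1) (X ^ ((d + 1) * n + μ)) := by
  intro j n μ hj1 hjd hμj hne
  have hμx : X ^ μ = (X : Polynomial ℂ) ^ ((d + 1) * 0 + μ) := by ring_nf
  have h1 := aux_key d ℓ hsym g v hv j n μ (by omega) hjd
  have h2 := aux_key d ℓ hsym g v hv (μ + 1) n μ (by omega) (by omega)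
  have h3 := aux_key d ℓ hsym g v hv j 0 μ (by omega) hjd
  have h4 := aux_key d ℓ hsym g v hv (μ + 1) 0 μ (by omega) (by omega)
  rw [← hμx] at h3 h4
  have hgμ : g (μ + 1) μ ≠ 0 ∧ ℓ μ (X ^ μ) ≠ 0 := by
    rw [h4] at hne
    exact ⟨left_ne_zero_of_mul hne, right_ne_zero_of_mul hne⟩
  obtain ⟨ha, hb⟩ := hgμ
  rw [h1, h2, h3, h4, mul_div_mul_right _ _ hb, div_mul_eq_mul_div, mul_left_comm,
    mul_div_cancel_left₀ _ ha]
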